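/- arXiv:1307.6692 — 6 statements merged into one kernel-verified Lean document; each statement's English description precedes it below -/
import Mathlib

section
/- The matrix p is irreducible if and only if the restriction of p̃ to the set of arcs E = {(i,j) : p_{ij} > 0} is irreducible. -/
/-- `p` is irreducible if and only if the restriction of `p̃` to the set of arcs
`E = {(i,j) : p i j > 0}` is irreducible, where a nonnegative square matrix `M` is
irreducible if for all indices `i, j` there exists `m ≥ 1` with `(M ^ m) i j > 0`. -/
theorem stmt_4 (n : ℕ)
    (p : Matrix (Fin n) (Fin n) ℝ)
    (hpnn : ∀ i j, 0 ≤ p i j) (hprow : ∀ i, ∑ j, p i j = 1)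
    (pt : Matrix (Fin n × Fin n) (Fin n × Fin n) ℝ)
    (hpt : ∀ i j k l, pt (i, j) (k, l) = if k = j then p j l else 0)
    (q : Matrix {e : Fin n × Fin n // 0 < p e.1 e.2}
                {e : Fin n × Fin n // 0 < p e.1 e.2} ℝ)
    (hq : ∀ a b, q a b = pt a.val b.val) :
    (∀ i j : Fin n, ∃ m : ℕ, 1 ≤ m ∧ 0 < (p ^ m) i j) ↔
      (∀ a b : {e : Fin n × Fin n // 0 < p e.1 e.2},
        ∃ m : ℕ, 1 ≤ m ∧ 0 < (q ^ m) a b) := by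
  have hqe : ∀ (a b : {e : Fin n × Fin n // 0 < p e.1 e.2}),
      q a b = if b.val.1 = a.val.2 then p a.val.2 b.val.2 else 0 := by
    intro a b
    rw [hq]
    have := hpt a.val.1 a.val.2 b.val.1 b.val.2
    simpa using this
  -- nonnegativity of powers of p
  have hpow : ∀ m (i j : Fin n), 0 ≤ (p ^ m) i j := by
    intro m
    induction m with
    | zero =>
      intro i j
      simp [Matrix.one_apply]
      split <;> norm_num
    | succ m ih =>
      intro i j
      rw [pow_succ, Matrix.mul_apply]
      exact Finset.sum_nonneg fun k _ => mul_nonneg (ih i k) (hpnn k j)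
  -- key formula
  have key : ∀ m (a b : {e : Fin n × Fin n // 0 < p e.1 e.2}),
      (q ^ (m + 1)) a b = (p ^ m) a.val.2 b.val.1 * p b.val.1 b.val.2 := by
    intro m
    induction m with
    | zero =>
      intro a b
      rw [pow_one, hqe]
      rw [pow_zero, Matrix.one_apply]
      by_cases h : b.val.1 = a.val.2
      · simp [h]
      · simp [h, Ne.symm h]
    | succ m ih =>
      intro a b
      rw [pow_succ, Matrix.mul_apply]
      have h1 : ∀ c : {e : Fin n × Fin n // 0 < p e.1 e.2},
          (q ^ (m+1)) a c * q c b
            = (p ^ m) a.val.2 c.val.1 * p c.val.1 c.val.2 *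
              (if b.val.1 = c.val.2 then p c.val.2 b.val.2 else 0) := by
        intro c; rw [ih, hqe]
      rw [Finset.sum_congr rfl fun c _ => h1 c]
      -- convert subtype sum to full sum
      have h2 : ∑ c : {e : Fin n × Fin n // 0 < p e.1 e.2},
          (p ^ m) a.val.2 c.val.1 * p c.val.1 c.val.2 *
              (if b.val.1 = c.val.2 then p c.val.2 b.val.2 else 0)
          = ∑ e : Fin n × Fin n,
          (p ^ m) a.val.2 e.1 * p e.1 e.2 *
              (if b.val.1 = e.2 then p e.2 b.val.2 else 0) := by
        rw [← Finset.sum_subtype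
          (s := Finset.univ.filter (fun e : Fin n × Fin n => 0 < p e.1 e.2))
          (f := fun e : Fin n × Fin n => (p ^ m) a.val.2 e.1 * p e.1 e.2 *
              (if b.val.1 = e.2 then p e.2 b.val.2 else 0))
          (by intro x; simp)]
        rw [Finset.sum_filter]
        apply Finset.sum_congr rfl
        intro e _
        by_cases h : 0 < p e.1 e.2
        · simp [h]
        · have : p e.1 e.2 = 0 := le_antisymm (not_lt.mp h) (hpnn e.1 e.2)
          simp [h, this]
      rw [h2, Fintype.sum_prod_type]
      have h3 : ∀ r : Fin n, ∑ s : Fin n,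
          (p ^ m) a.val.2 r * p r s * (if b.val.1 = s then p s b.val.2 else 0)
          = (p ^ m) a.val.2 r * p r b.val.1 * p b.val.1 b.val.2 := by
        intro r
        rw [Finset.sum_congr rfl (fun s _ => by rw [mul_ite, mul_zero])]
        simp
      rw [Finset.sum_congr rfl fun r _ => h3 r]
      rw [← Finset.sum_mul, ← Matrix.mul_apply, ← pow_succ]
  have exrow : ∀ i : Fin n, ∃ j, 0 < p i j := by
    intro i
    by_contra h
    push_neg at h
    have : ∑ j, p i j = 0 := Finset.sum_eq_zero fun j _ =>
      le_antisymm (h j) (hpnn i j)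
    rw [hprow i] at this; norm_num at this
  constructor
  · intro H a b
    obtain ⟨m, hm1, hm2⟩ := H a.val.2 b.val.1
    exact ⟨m + 1, by omega, by rw [key]; exact mul_pos hm2 b.property⟩
  · intro H i j
    obtain ⟨j₁, hj₁⟩ := exrow i
    obtain ⟨l, hl⟩ := exrow j
    obtain ⟨m, hm1, hm2⟩ := H ⟨(i, j₁), hj₁⟩ ⟨(j, l), hl⟩
    obtain ⟨m', rfl⟩ : ∃ m', m = m' + 1 := ⟨m - 1, by omega⟩
    rw [key] at hm2
    simp only at hm2
    have hx : 0 < (p ^ m') j₁ j := by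
      rcases (hpow m' j₁ j).lt_or_eq with h | h
      · exact h
      · rw [← h] at hm2; simp at hm2
    refine ⟨m' + 1, by omega, ?_⟩
    rw [pow_succ', Matrix.mul_apply]
    apply Finset.sum_pos'
    · intro k _; exact mul_nonneg (hpnn i k) (hpow m' k j)
    · exact ⟨j₁, Finset.mem_univ _, mul_pos hj₁ hx⟩
end

section
/- The matrix p is primitive if and only if the restriction of p̃ to the set of arcs E = {(i,j) : p_{ij} > 0} is primitive. -/
/-- `p` is primitive if and only if the restriction of `p̃` to the set of arcs
`E = {(i,j) : p i j > 0}` is primitive, where a nonnegative square matrix `M` is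
primitive if there exists `m ≥ 1` such that every entry of `M ^ m` is positive. -/
theorem stmt_5 (n : ℕ)
    (p : Matrix (Fin n) (Fin n) ℝ)
    (hpnn : ∀ i j, 0 ≤ p i j) (hprow : ∀ i, ∑ j, p i j = 1)
    (pt : Matrix (Fin n × Fin n) (Fin n × Fin n) ℝ)
    (hpt : ∀ i j k l, pt (i, j) (k, l) = if k = j then p j l else 0)
    (q : Matrix {e : Fin n × Fin n // 0 < p e.1 e.2}
                {e : Fin n × Fin n // 0 < p e.1 e.2} ℝ)
    (hq : ∀ a b, q a b = pt a.val b.val) :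
    (∃ m : ℕ, 1 ≤ m ∧ ∀ i j : Fin n, 0 < (p ^ m) i j) ↔
      (∃ m : ℕ, 1 ≤ m ∧ ∀ a b : {e : Fin n × Fin n // 0 < p e.1 e.2},
        0 < (q ^ m) a b) := by
  -- nonnegativity of powers
  have hq' : ∀ a b : {e : Fin n × Fin n // 0 < p e.1 e.2},
      q a b = if b.val.1 = a.val.2 then p a.val.2 b.val.2 else 0 := by
    intro a b
    rw [hq]
    have := hpt a.val.1 a.val.2 b.val.1 b.val.2
    simpa using this
  have hpownn : ∀ m : ℕ, ∀ i j : Fin n, 0 ≤ (p ^ m) i j := by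
    intro m
    induction m with
    | zero =>
      intro i j
      simp only [pow_zero, Matrix.one_apply]
      split_ifs <;> norm_num
    | succ m ih =>
      intro i j
      rw [pow_succ, Matrix.mul_apply]
      exact Finset.sum_nonneg fun c _ => mul_nonneg (ih i c) (hpnn c j)
  -- subtype sum lemma
  have hsub : ∀ (g : Fin n × Fin n → ℝ), (∀ c, ¬ 0 < p c.1 c.2 → g c = 0) →
      ∑ c : {e : Fin n × Fin n // 0 < p e.1 e.2}, g c.val = ∑ c : Fin n × Fin n, g c := by
    intro g hg
    rw [← Finset.sum_subtype (Finset.univ.filter fun e : Fin n × Fin n => 0 < p e.1 e.2)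
      (by simp) g]
    exact Finset.sum_filter_of_ne (fun c _ hc => by
      by_contra h; exact hc (hg c h))
  -- key formula
  have hkey : ∀ m : ℕ, ∀ a b : {e : Fin n × Fin n // 0 < p e.1 e.2},
      (q ^ (m + 1)) a b = (p ^ m) a.val.2 b.val.1 * p b.val.1 b.val.2 := by
    intro m
    induction m with
    | zero =>
      intro a b
      rw [pow_one, hq', pow_zero]
      by_cases h : b.val.1 = a.val.2
      · rw [if_pos h, h, Matrix.one_apply_eq, one_mul]
      · rw [if_neg h, Matrix.one_apply_ne (fun hh => h hh.symm), zero_mul]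
    | succ m ih =>
      intro a b
      rw [pow_succ', Matrix.mul_apply]
      have step : ∀ c : {e : Fin n × Fin n // 0 < p e.1 e.2},
          q a c * (q ^ (m + 1)) c b
            = (if c.val.1 = a.val.2 then p a.val.2 c.val.2 else 0) *
              ((p ^ m) c.val.2 b.val.1 * p b.val.1 b.val.2) := by
        intro c; rw [hq', ih]
      rw [Finset.sum_congr rfl (fun c _ => step c)]
      rw [hsub (fun c => (if c.1 = a.val.2 then p a.val.2 c.2 else 0) *
            ((p ^ m) c.2 b.val.1 * p b.val.1 b.val.2))
          (fun c hc => by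
            split_ifs with h
            · have : p c.1 c.2 = 0 := le_antisymm (not_lt.mp hc) (hpnn c.1 c.2)
              rw [h] at this
              rw [this, zero_mul]
            · rw [zero_mul])]
      rw [Fintype.sum_prod_type]
      simp only [ite_mul, zero_mul]
      rw [Finset.sum_comm]
      simp only [Finset.sum_ite_eq', Finset.mem_univ, if_true]
      rw [pow_succ', Matrix.mul_apply, Finset.sum_mul]
      exact Finset.sum_congr rfl fun x _ => by ring
  have harc : ∀ i : Fin n, ∃ l : Fin n, 0 < p i l := by
    intro i
    by_contra h
    push_neg at h
    have h0 : ∀ l, p i l = 0 := fun l => le_antisymm (h l) (hpnn i l)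
    have h1 := hprow i
    rw [Finset.sum_congr rfl fun l _ => h0 l] at h1
    simp at h1
  constructor
  · rintro ⟨m, _, hpos⟩
    exact ⟨m + 1, by omega, fun a b => by
      rw [hkey]
      exact mul_pos (hpos _ _) b.prop⟩
  · rintro ⟨m, hm, hpos⟩
    obtain ⟨k, rfl⟩ : ∃ k, m = k + 1 := ⟨m - 1, by omega⟩
    refine ⟨k + 1, by omega, fun i j => ?_⟩
    obtain ⟨l1, hl1⟩ := harc i
    obtain ⟨l2, hl2⟩ := harc j
    have hthis := hpos ⟨(i, l1), hl1⟩ ⟨(j, l2), hl2⟩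
    rw [hkey] at hthis
    have hpk : 0 < (p ^ k) l1 j := by
      by_contra hc
      rw [le_antisymm (not_lt.mp hc) (hpownn k l1 j), zero_mul] at hthis
      exact lt_irrefl 0 hthis
    rw [pow_succ', Matrix.mul_apply]
    exact Finset.sum_pos' (fun c _ => mul_nonneg (hpnn i c) (hpownn k c j))
      ⟨l1, Finset.mem_univ _, mul_pos hl1 hpk⟩
end

section
/- Let A : ℝ → M_n(ℝ) be a family of matrices, λ : ℝ → ℝ, and w : ℝ → ℝⁿ be such that every entry of A, λ, and every component of w has a derivative at t₀, and A(t) w(t) = λ(t) w(t) for all t in a neighborhood of t₀. Let v ∈ ℝⁿ satisfy vᵀ A(t₀) = λ(t₀) vᵀ and v·w(t₀) ≠ 0. Then λ'(t₀) = (vᵀ A'(t₀) w(t₀)) / (v·w(t₀)). -/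
/-- Perturbation formula for a simple eigenvalue: if `A t ⬝ w t = λ t • w t` near `t₀`,
all entries of `A`, `λ` and `w` are differentiable at `t₀`, `v` is a left eigenvector
of `A t₀` for `λ t₀` with `v · w t₀ ≠ 0`, then
`λ'(t₀) = (vᵀ A'(t₀) w(t₀)) / (v · w(t₀))`. -/
theorem stmt_10 (n : ℕ)
    (A : ℝ → Matrix (Fin n) (Fin n) ℝ) (lam : ℝ → ℝ) (w : ℝ → Fin n → ℝ)
    (t₀ : ℝ)
    (A' : Matrix (Fin n) (Fin n) ℝ)
    (hA : ∀ i j, HasDerivAt (fun t => A t i j) (A' i j) t₀)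
    (lam' : ℝ) (hlam : HasDerivAt lam lam' t₀)
    (w' : Fin n → ℝ)
    (hw : ∀ i, HasDerivAt (fun t => w t i) (w' i) t₀)
    (heig : ∀ᶠ t in nhds t₀, ∀ i, ∑ j, A t i j * w t j = lam t * w t i)
    (v : Fin n → ℝ)
    (hv : ∀ j, ∑ i, v i * A t₀ i j = lam t₀ * v j)
    (hvw : ∑ j, v j * w t₀ j ≠ 0) :
    lam' = (∑ i, ∑ j, v i * A' i j * w t₀ j) / (∑ j, v j * w t₀ j) := by
  -- f t = ∑ i, v i * ∑ j, A t i j * w t j ; g t = lam t * ∑ i, v i * w t i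
  have hf : HasDerivAt (fun t => ∑ i, v i * ∑ j, A t i j * w t j)
      (∑ i, v i * ∑ j, (A' i j * w t₀ j + A t₀ i j * w' j)) t₀ := by
    apply HasDerivAt.fun_sum
    intro i _
    exact (HasDerivAt.fun_sum fun j _ => ((hA i j).mul (hw j))).const_mul (v i)
  have hg : HasDerivAt (fun t => lam t * ∑ i, v i * w t i)
      (lam' * (∑ i, v i * w t₀ i) + lam t₀ * ∑ i, v i * w' i) t₀ := by
    exact hlam.mul (HasDerivAt.fun_sum fun i _ => (hw i).const_mul (v i))
  have heq : (fun t => ∑ i, v i * ∑ j, A t i j * w t j)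
      =ᶠ[nhds t₀] (fun t => lam t * ∑ i, v i * w t i) := by
    filter_upwards [heig] with t ht
    simp only [ht]
    rw [Finset.mul_sum]
    exact Finset.sum_congr rfl fun i _ => by ring
  have hderiv := hf.congr_of_eventuallyEq heq.symm
  have huniq := hg.unique hderiv
  -- cross term cancellation
  have hcross : ∑ i, v i * ∑ j, A t₀ i j * w' j = lam t₀ * ∑ i, v i * w' i := by
    have : ∑ i, v i * ∑ j, A t₀ i j * w' j = ∑ j, (∑ i, v i * A t₀ i j) * w' j := by
      simp only [Finset.mul_sum, Finset.sum_mul]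
      rw [Finset.sum_comm]
      exact Finset.sum_congr rfl fun j _ => Finset.sum_congr rfl fun i _ => by ring
    rw [this]
    simp only [hv, Finset.mul_sum]
    exact Finset.sum_congr rfl fun j _ => by ring
  have key : lam' * (∑ i, v i * w t₀ i) = ∑ i, ∑ j, v i * A' i j * w t₀ j := by
    have expand : ∑ i, v i * ∑ j, (A' i j * w t₀ j + A t₀ i j * w' j)
        = (∑ i, ∑ j, v i * A' i j * w t₀ j) + ∑ i, v i * ∑ j, A t₀ i j * w' j := by
      simp only [Finset.mul_sum, ← Finset.sum_add_distrib]
      exact Finset.sum_congr rfl fun i _ => Finset.sum_congr rfl fun j _ => by ring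
    have := huniq
    rw [expand, hcross] at this
    linarith
  field_simp
  linarith [key]
end

section
/- For the Leslie matrix L with eigenvalue λ, right eigenvector w_i = l_i λ^{−(i−1)} and left eigenvector v_i = (λ^{i−1}/l_i) ∑_{j=i}^{ω} l_j f_j λ^{−j}, the sum of the elasticities of the first-row (fertility) entries equals the reciprocal of the generation time: ∑_{j=1}^{ω} (L_{1j}/λ) · v_1 w_j / (v·w) = 1 / ∑_{i=1}^{ω} i l_i f_i λ^{−i}. Equivalently, the stationary probability of the newborn stage, π_1 = v_1 w_1/(v·w), equals 1/T where T = ∑_i i l_i f_i λ^{−i}. -/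
/-- For the Leslie matrix, the sum of the elasticities of the first-row (fertility)
entries equals the reciprocal of the generation time `T = ∑ i, i l_i f_i λ^{-i}`;
equivalently, the stationary probability of the newborn stage, `π₁ = v₁ w₁/(v·w)`,
equals `1/T`. -/
theorem stmt_16 (ω : ℕ) (hω : 1 ≤ ω)
    (s : ℕ → ℝ) (hs : ∀ i, 1 ≤ i → i ≤ ω - 1 → 0 < s i)
    (f : ℕ → ℝ) (hf : ∀ i, 1 ≤ i → i ≤ ω → 0 ≤ f i)
    (L : Matrix (Fin ω) (Fin ω) ℝ)
    (hL : ∀ i j : Fin ω, L i j =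
      if (i : ℕ) = 0 then f ((j : ℕ) + 1)
      else if (i : ℕ) = (j : ℕ) + 1 then s ((j : ℕ) + 1) else 0)
    (l : ℕ → ℝ) (hl1 : l 1 = 1)
    (hl : ∀ i, 2 ≤ i → l i = ∏ k ∈ Finset.Icc 1 (i - 1), s k)
    (lam : ℝ) (hlam : 0 < lam)
    (heuler : ∑ i ∈ Finset.Icc 1 ω, l i * f i / lam ^ i = 1)
    (hT : 0 < ∑ i ∈ Finset.Icc 1 ω, (i : ℝ) * l i * f i / lam ^ i)
    (w : Fin ω → ℝ)
    (hw : ∀ i : Fin ω, w i = l ((i : ℕ) + 1) / lam ^ (i : ℕ))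
    (v : Fin ω → ℝ)
    (hv : ∀ i : Fin ω, v i =
      lam ^ (i : ℕ) / l ((i : ℕ) + 1) *
        ∑ j ∈ Finset.Icc ((i : ℕ) + 1) ω, l j * f j / lam ^ j) :
    (∑ j, (L ⟨0, hω⟩ j / lam) * (v ⟨0, hω⟩ * w j / (∑ i, v i * w i)) =
        1 / ∑ i ∈ Finset.Icc 1 ω, (i : ℝ) * l i * f i / lam ^ i) ∧
      v ⟨0, hω⟩ * w ⟨0, hω⟩ / (∑ i, v i * w i) =
        1 / ∑ i ∈ Finset.Icc 1 ω, (i : ℝ) * l i * f i / lam ^ i := by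
  have hlpos : ∀ i, 1 ≤ i → i ≤ ω → 0 < l i := by
    intro i h1 h2
    rcases Nat.lt_or_ge i 2 with h | h
    · interval_cases i
      · simp [hl1]
    · rw [hl i h]
      apply Finset.prod_pos
      intro k hk
      simp only [Finset.mem_Icc] at hk
      exact hs k hk.1 (by omega)
  have hlamne : ∀ n : ℕ, lam ^ n ≠ 0 := fun n => pow_ne_zero n (ne_of_gt hlam)
  have hvw : ∀ i : Fin ω, v i * w i
      = ∑ j ∈ Finset.Icc ((i : ℕ) + 1) ω, l j * f j / lam ^ j := by
    intro i
    have h1 : l ((i : ℕ) + 1) ≠ 0 := ne_of_gt (hlpos _ (by omega) (by omega))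
    rw [hv i, hw i]
    field_simp
  have hsum : (∑ i, v i * w i)
      = ∑ i ∈ Finset.Icc 1 ω, (i : ℝ) * l i * f i / lam ^ i := by
    simp_rw [hvw]
    rw [Fin.sum_univ_eq_sum_range (fun i => ∑ j ∈ Finset.Icc (i + 1) ω, l j * f j / lam ^ j) ω]
    have h1 : ∀ i ∈ Finset.range ω, ∑ j ∈ Finset.Icc (i + 1) ω, l j * f j / lam ^ j
        = ∑ j ∈ Finset.Icc 1 ω, if i + 1 ≤ j then l j * f j / lam ^ j else 0 := by
      intro i _
      rw [← Finset.sum_filter]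
      apply Finset.sum_congr _ (fun _ _ => rfl)
      ext j
      simp only [Finset.mem_Icc, Finset.mem_filter]
      omega
    rw [Finset.sum_congr rfl h1, Finset.sum_comm]
    apply Finset.sum_congr rfl
    intro j hj
    simp only [Finset.mem_Icc] at hj
    rw [← Finset.sum_filter]
    have h2 : Finset.filter (fun i => i + 1 ≤ j) (Finset.range ω) = Finset.range j := by
      ext i
      simp only [Finset.mem_filter, Finset.mem_range]
      omega
    rw [h2, Finset.sum_const, Finset.card_range, nsmul_eq_mul]
    ring
  have hv0 : v ⟨0, hω⟩ = 1 := by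
    rw [hv]
    simp [hl1, heuler]
  have hw0 : w ⟨0, hω⟩ = 1 := by
    rw [hw]
    simp [hl1]
  have hTne : (∑ i ∈ Finset.Icc 1 ω, (i : ℝ) * l i * f i / lam ^ i) ≠ 0 := ne_of_gt hT
  constructor
  · have hterm : ∀ j : Fin ω, L ⟨0, hω⟩ j / lam * (v ⟨0, hω⟩ * w j / (∑ i, v i * w i))
        = (l ((j : ℕ) + 1) * f ((j : ℕ) + 1) / lam ^ ((j : ℕ) + 1))
          / (∑ i ∈ Finset.Icc 1 ω, (i : ℝ) * l i * f i / lam ^ i) := by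
      intro j
      rw [hL, hv0, hw j, hsum]
      simp only [Fin.val_mk, if_pos rfl]
      rw [pow_succ]
      field_simp
      simp only [↓reduceIte]
      ring
    rw [Fintype.sum_congr _ _ hterm, ← Finset.sum_div]
    congr 1
    rw [Fin.sum_univ_eq_sum_range (fun j => l (j + 1) * f (j + 1) / lam ^ (j + 1)) ω]
    rw [← heuler, show Finset.Icc 1 ω = Finset.Ico 1 (ω + 1) from by rw [Finset.Ico_add_one_right_eq_Icc],
      Finset.sum_Ico_eq_sum_range]
    simp [add_comm]
  · rw [hv0, hw0, hsum]
    simp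
end

section
/- The numbers P(1) = ϖ_R Q_{RR} 𝟙 and P(k) = ϖ_R Q_{RS} (Q_{SS})^{k−2} Q_{SR} 𝟙 for k ≥ 2 form a probability distribution on the positive integers: P(k) ≥ 0 for all k and ∑_{k=1}^{∞} P(k) = 1. -/
open Finset Matrix Filter Topology

lemma stmt17_mul_nn {α β γ : Type*} [Fintype β] (A : Matrix α β ℝ) (B : Matrix β γ ℝ)
    (hA : ∀ i j, 0 ≤ A i j) (hB : ∀ i j, 0 ≤ B i j) : ∀ i j, 0 ≤ (A * B) i j := by
  intro i j
  rw [Matrix.mul_apply]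
  exact Finset.sum_nonneg fun k _ => mul_nonneg (hA i k) (hB k j)

lemma stmt17_pow_nn {α : Type*} [Fintype α] [DecidableEq α] (A : Matrix α α ℝ)
    (hA : ∀ i j, 0 ≤ A i j) : ∀ m i j, 0 ≤ (A ^ m) i j := by
  intro m
  induction m with
  | zero =>
    intro i j
    rw [pow_zero]
    by_cases h : i = j <;> simp [Matrix.one_apply, h]
  | succ n ih =>
    rw [pow_succ]
    exact stmt17_mul_nn _ _ ih hA

/-- For a finite irreducible Markov chain `Q` with stationary distribution `π` and a
partition of the states into nonempty sets `R` and `S`, the numbers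
`P 1 = ϖ_R Q_RR 𝟙` and `P k = ϖ_R Q_RS (Q_SS)^(k-2) Q_SR 𝟙` for `k ≥ 2` form a
probability distribution on the positive integers. -/
theorem stmt_17 {ι : Type*} [Fintype ι] [DecidableEq ι]
    (rp : ι → Prop) [DecidablePred rp]
    (hR : Nonempty {i // rp i}) (hS : Nonempty {i // ¬ rp i})
    (Q : Matrix ι ι ℝ)
    (hQnn : ∀ i j, 0 ≤ Q i j) (hQrow : ∀ i, ∑ j, Q i j = 1)
    (hirr : ∀ i j, ∃ m : ℕ, 1 ≤ m ∧ 0 < (Q ^ m) i j)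
    (π : ι → ℝ) (hπnn : ∀ i, 0 ≤ π i) (hπsum : ∑ i, π i = 1)
    (hπstat : ∀ j, ∑ i, π i * Q i j = π j)
    (QRR : Matrix {i // rp i} {i // rp i} ℝ)
    (hQRR : ∀ a b, QRR a b = Q a.val b.val)
    (QRS : Matrix {i // rp i} {i // ¬ rp i} ℝ)
    (hQRS : ∀ a b, QRS a b = Q a.val b.val)
    (QSR : Matrix {i // ¬ rp i} {i // rp i} ℝ)
    (hQSR : ∀ a b, QSR a b = Q a.val b.val)
    (QSS : Matrix {i // ¬ rp i} {i // ¬ rp i} ℝ)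
    (hQSS : ∀ a b, QSS a b = Q a.val b.val)
    (ϖ : {i // rp i} → ℝ)
    (hϖ : ∀ b, ϖ b = π b.val / ∑ b' : {i // rp i}, π b'.val)
    (P : ℕ → ℝ)
    (hP1 : P 1 = ∑ b, Matrix.vecMul ϖ QRR b)
    (hPk : ∀ k, 2 ≤ k → P k = ∑ b, Matrix.vecMul ϖ (QRS * QSS ^ (k - 2) * QSR) b) :
    (∀ k, 1 ≤ k → 0 ≤ P k) ∧ HasSum (fun k : ℕ => P (k + 1)) 1 := by
  classical
  -- basic nonnegativity
  have hQpow : ∀ m i j, 0 ≤ (Q ^ m) i j := stmt17_pow_nn Q hQnn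
  have hQSSnn : ∀ i j, 0 ≤ QSS i j := fun i j => (hQSS i j) ▸ hQnn i.val j.val
  have hQSSpow : ∀ m i j, 0 ≤ (QSS ^ m) i j := stmt17_pow_nn QSS hQSSnn
  have hQRRnn : ∀ i j, 0 ≤ QRR i j := fun i j => (hQRR i j) ▸ hQnn i.val j.val
  have hQRSnn : ∀ i j, 0 ≤ QRS i j := fun i j => (hQRS i j) ▸ hQnn i.val j.val
  have hQSRnn : ∀ i j, 0 ≤ QSR i j := fun i j => (hQSR i j) ▸ hQnn i.val j.val
  -- positivity of π
  have hπpow : ∀ (m : ℕ) (j : ι), ∑ i, π i * (Q ^ m) i j = π j := by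
    intro m
    induction m with
    | zero =>
      intro j
      simp [Matrix.one_apply, mul_ite]
    | succ n ih =>
      intro j
      have h1 : ∀ i, π i * (Q ^ (n + 1)) i j = ∑ k, π i * ((Q ^ n) i k * Q k j) := by
        intro i
        rw [pow_succ, Matrix.mul_apply, Finset.mul_sum]
      calc ∑ i, π i * (Q ^ (n + 1)) i j
          = ∑ i, ∑ k, π i * ((Q ^ n) i k * Q k j) := by
            exact Finset.sum_congr rfl fun i _ => h1 i
        _ = ∑ k, ∑ i, π i * ((Q ^ n) i k * Q k j) := Finset.sum_comm
        _ = ∑ k, (∑ i, π i * (Q ^ n) i k) * Q k j := by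
            refine Finset.sum_congr rfl fun k _ => ?_
            rw [Finset.sum_mul]
            exact Finset.sum_congr rfl fun i _ => by ring
        _ = ∑ k, π k * Q k j := by
            exact Finset.sum_congr rfl fun k _ => by rw [ih k]
        _ = π j := hπstat j
  have hπpos : ∀ i, 0 < π i := by
    obtain ⟨i0, hi0⟩ : ∃ i, 0 < π i := by
      by_contra h
      push_neg at h
      have : ∑ i, π i = 0 :=
        Finset.sum_eq_zero fun i _ => le_antisymm (h i) (hπnn i)
      rw [this] at hπsum
      norm_num at hπsum
    intro j
    obtain ⟨m, _, hm⟩ := hirr i0 j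
    have hle : π i0 * (Q ^ m) i0 j ≤ ∑ i, π i * (Q ^ m) i j :=
      Finset.single_le_sum (fun i _ => mul_nonneg (hπnn i) (hQpow m i j))
        (Finset.mem_univ i0)
    calc (0:ℝ) < π i0 * (Q ^ m) i0 j := mul_pos hi0 hm
      _ ≤ ∑ i, π i * (Q ^ m) i j := hle
      _ = π j := hπpow m j
  -- ϖ facts
  set Z : ℝ := ∑ b' : {i // rp i}, π b'.val with hZdef
  have hZpos : 0 < Z := Finset.sum_pos (fun b _ => hπpos b.val) Finset.univ_nonempty
  have hϖnn : ∀ b, 0 ≤ ϖ b := fun b => by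
    rw [hϖ b]; exact div_nonneg (hπnn b.val) hZpos.le
  have hϖsum : ∑ b, ϖ b = 1 := by
    have : ∑ b, ϖ b = (∑ b : {i // rp i}, π b.val) / Z := by
      rw [Finset.sum_div]
      exact Finset.sum_congr rfl fun b _ => hϖ b
    rw [this, ← hZdef, div_self hZpos.ne']
  -- splitting sums over ι
  have hsplit : ∀ f : ι → ℝ,
      (∑ a : {i // rp i}, f a.val) + ∑ a : {i // ¬ rp i}, f a.val = ∑ i, f i :=
    fun f => Fintype.sum_subtype_add_sum_subtype rp f
  have hrowS : ∀ s : {i // ¬ rp i},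
      (∑ b : {i // rp i}, QSR s b) + ∑ s' : {i // ¬ rp i}, QSS s s' = 1 := by
    intro s
    have := hsplit (fun i => Q s.val i)
    rw [hQrow s.val] at this
    calc (∑ b : {i // rp i}, QSR s b) + ∑ s' : {i // ¬ rp i}, QSS s s'
        = (∑ b : {i // rp i}, Q s.val b.val) + ∑ s' : {i // ¬ rp i}, Q s.val s'.val := by
          rw [Finset.sum_congr rfl fun b _ => hQSR s b,
            Finset.sum_congr rfl fun s' _ => hQSS s s']
      _ = 1 := this
  have hrowR : ∀ b : {i // rp i},
      (∑ b' : {i // rp i}, QRR b b') + ∑ s : {i // ¬ rp i}, QRS b s = 1 := by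
    intro b
    have := hsplit (fun i => Q b.val i)
    rw [hQrow b.val] at this
    calc (∑ b' : {i // rp i}, QRR b b') + ∑ s : {i // ¬ rp i}, QRS b s
        = (∑ b' : {i // rp i}, Q b.val b'.val) + ∑ s : {i // ¬ rp i}, Q b.val s.val := by
          rw [Finset.sum_congr rfl fun b' _ => hQRR b b',
            Finset.sum_congr rfl fun s _ => hQRS b s]
      _ = 1 := this
  -- row sums of powers of QSS
  set g : ℕ → {i // ¬ rp i} → ℝ := fun m s => ∑ s', (QSS ^ m) s s' with hgdef
  have hg0 : ∀ s, g 0 s = 1 := by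
    intro s
    simp [hgdef, Matrix.one_apply]
  have hgnn : ∀ m s, 0 ≤ g m s := fun m s =>
    Finset.sum_nonneg fun s' _ => hQSSpow m s s'
  have hgadd : ∀ m n s, g (m + n) s = ∑ s', (QSS ^ m) s s' * g n s' := by
    intro m n s
    calc g (m + n) s = ∑ s'', (QSS ^ m * QSS ^ n) s s'' := by rw [hgdef]; simp [pow_add]
      _ = ∑ s'', ∑ s', (QSS ^ m) s s' * (QSS ^ n) s' s'' := by
          exact Finset.sum_congr rfl fun s'' _ => Matrix.mul_apply
      _ = ∑ s', ∑ s'', (QSS ^ m) s s' * (QSS ^ n) s' s'' := Finset.sum_comm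
      _ = ∑ s', (QSS ^ m) s s' * g n s' := by
          exact Finset.sum_congr rfl fun s' _ => by rw [hgdef, Finset.mul_sum]
  have hgle1 : ∀ m s, g m s ≤ 1 := by
    intro m
    induction m with
    | zero => intro s; rw [hg0]
    | succ n ih =>
      intro s
      calc g (n + 1) s = ∑ s', (QSS ^ n) s s' * g 1 s' := hgadd n 1 s
        _ ≤ ∑ s', (QSS ^ n) s s' * 1 := by
            refine Finset.sum_le_sum fun s' _ => ?_
            refine mul_le_mul_of_nonneg_left ?_ (hQSSpow n s s')
            have h1 : g 1 s' = ∑ s'', QSS s' s'' := by simp [hgdef]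
            rw [h1]
            have := hrowS s'
            nlinarith [Finset.sum_nonneg (fun b (_ : b ∈ Finset.univ) => hQSRnn s' b)]
        _ = g n s := by simp [hgdef]
        _ ≤ 1 := ih s
  have hganti : ∀ m n s, g (m + n) s ≤ g m s := by
    intro m n s
    calc g (m + n) s = ∑ s', (QSS ^ m) s s' * g n s' := hgadd m n s
      _ ≤ ∑ s', (QSS ^ m) s s' * 1 := Finset.sum_le_sum fun s' _ =>
          mul_le_mul_of_nonneg_left (hgle1 n s') (hQSSpow m s s')
      _ = g m s := by simp [hgdef]
  -- domination by Q ^ m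
  have hdom : ∀ m (s s' : {i // ¬ rp i}), (QSS ^ m) s s' ≤ (Q ^ m) s.val s'.val := by
    intro m
    induction m with
    | zero =>
      intro s s'
      by_cases h : s = s'
      · subst h; simp [Matrix.one_apply]
      · have h' : s.val ≠ s'.val := fun hv => h (Subtype.ext hv)
        simp [Matrix.one_apply, h, h']
    | succ n ih =>
      intro s s'
      calc (QSS ^ (n + 1)) s s' = ∑ s'', (QSS ^ n) s s'' * QSS s'' s' := by
            rw [pow_succ, Matrix.mul_apply]
        _ ≤ ∑ s'' : {i // ¬ rp i}, (Q ^ n) s.val s''.val * Q s''.val s'.val := by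
            refine Finset.sum_le_sum fun s'' _ => ?_
            rw [hQSS]
            exact mul_le_mul_of_nonneg_right (ih s s'') (hQnn s''.val s'.val)
        _ ≤ ∑ i, (Q ^ n) s.val i * Q i s'.val := by
            rw [← hsplit (fun i => (Q ^ n) s.val i * Q i s'.val)]
            have : (0:ℝ) ≤ ∑ a : {i // rp i}, (Q ^ n) s.val a.val * Q a.val s'.val :=
              Finset.sum_nonneg fun a _ => mul_nonneg (hQpow n _ _) (hQnn _ _)
            linarith
        _ = (Q ^ (n + 1)) s.val s'.val := by rw [pow_succ, Matrix.mul_apply]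
  -- row sums of Q ^ m are 1
  have hQrowpow : ∀ m i, ∑ j, (Q ^ m) i j = 1 := by
    intro m
    induction m with
    | zero => intro i; simp [Matrix.one_apply]
    | succ n ih =>
      intro i
      calc ∑ j, (Q ^ (n + 1)) i j = ∑ j, ∑ k, (Q ^ n) i k * Q k j := by
            exact Finset.sum_congr rfl fun j _ => by rw [pow_succ, Matrix.mul_apply]
        _ = ∑ k, ∑ j, (Q ^ n) i k * Q k j := Finset.sum_comm
        _ = ∑ k, (Q ^ n) i k := by
            refine Finset.sum_congr rfl fun k _ => ?_
            rw [← Finset.mul_sum, hQrow k, mul_one]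
        _ = 1 := ih i
  -- for each s there is m ≥ 1 with g m s < 1
  obtain ⟨r0⟩ := id hR
  have hesc : ∀ s : {i // ¬ rp i}, ∃ m, 1 ≤ m ∧ g m s < 1 := by
    intro s
    obtain ⟨m, hm1, hmp⟩ := hirr s.val r0.val
    refine ⟨m, hm1, ?_⟩
    have h1 : g m s ≤ ∑ s' : {i // ¬ rp i}, (Q ^ m) s.val s'.val :=
      Finset.sum_le_sum fun s' _ => hdom m s s'
    have h2 := hsplit (fun i => (Q ^ m) s.val i)
    rw [hQrowpow m s.val] at h2
    have h3 : (Q ^ m) s.val r0.val ≤ ∑ a : {i // rp i}, (Q ^ m) s.val a.val :=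
      Finset.single_le_sum (fun a _ => hQpow m s.val a.val) (Finset.mem_univ r0)
    linarith
  choose ms hms1 hmslt using hesc
  set M : ℕ := Finset.univ.sup ms with hMdef
  obtain ⟨s0⟩ := id hS
  have hgM : ∀ s, g M s < 1 := by
    intro s
    have hle : ms s ≤ M := Finset.le_sup (Finset.mem_univ s)
    have : g M s ≤ g (ms s) s := by
      have := hganti (ms s) (M - ms s) s
      rwa [Nat.add_sub_cancel' hle] at this
    exact lt_of_le_of_lt this (hmslt s)
  set c : ℝ := Finset.univ.sup' (Finset.univ_nonempty) (fun s => g M s) with hcdef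
  have hcges : ∀ s, g M s ≤ c := fun s => Finset.le_sup' _ (Finset.mem_univ s)
  have hc1 : c < 1 := by
    rw [hcdef]
    exact (Finset.sup'_lt_iff _).mpr fun s _ => hgM s
  have hc0 : 0 ≤ c := le_trans (hgnn M s0) (hcges s0)
  have hMpos : 1 ≤ M := le_trans (hms1 s0) (Finset.le_sup (Finset.mem_univ s0))
  -- geometric decay along multiples of M
  have hgeo : ∀ k s, g (k * M) s ≤ c ^ k := by
    intro k
    induction k with
    | zero => intro s; simp [hg0]
    | succ n ih =>
      intro s
      have he : (n + 1) * M = M + n * M := by ring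
      calc g ((n + 1) * M) s = ∑ s', (QSS ^ M) s s' * g (n * M) s' := by
            rw [he]; exact hgadd M (n * M) s
        _ ≤ ∑ s', (QSS ^ M) s s' * c ^ n := Finset.sum_le_sum fun s' _ =>
            mul_le_mul_of_nonneg_left (ih s') (hQSSpow M s s')
        _ = g M s * c ^ n := by rw [← Finset.sum_mul]
        _ ≤ c * c ^ n := mul_le_mul_of_nonneg_right (hcges s) (pow_nonneg hc0 n)
        _ = c ^ (n + 1) := by ring
  -- the tail vector
  set w : {i // ¬ rp i} → ℝ := Matrix.vecMul ϖ QRS with hwdef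
  have hwnn : ∀ s, 0 ≤ w s := by
    intro s
    rw [hwdef]
    simp only [Matrix.vecMul, dotProduct]
    exact Finset.sum_nonneg fun b _ => mul_nonneg (hϖnn b) (hQRSnn b s)
  set v : ℕ → ℝ := fun m => ∑ s', w s' * g m s' with hvdef
  have hvnn : ∀ m, 0 ≤ v m := fun m =>
    Finset.sum_nonneg fun s' _ => mul_nonneg (hwnn s') (hgnn m s')
  have hveq : ∀ m, v m = ∑ s, Matrix.vecMul ϖ (QRS * QSS ^ m) s := by
    intro m
    have h1 : ∀ s, Matrix.vecMul ϖ (QRS * QSS ^ m) s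
        = ∑ s', w s' * (QSS ^ m) s' s := by
      intro s
      rw [← Matrix.vecMul_vecMul, ← hwdef]
      simp [Matrix.vecMul, dotProduct]
    rw [hvdef]
    calc (∑ s', w s' * g m s')
        = ∑ s', ∑ s, w s' * (QSS ^ m) s' s := by
          exact Finset.sum_congr rfl fun s' _ => by rw [hgdef, Finset.mul_sum]
      _ = ∑ s, ∑ s', w s' * (QSS ^ m) s' s := Finset.sum_comm
      _ = ∑ s, Matrix.vecMul ϖ (QRS * QSS ^ m) s := by
          exact Finset.sum_congr rfl fun s _ => (h1 s).symm
  -- v tends to 0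
  set W : ℝ := ∑ s', w s' with hWdef
  have hWnn : 0 ≤ W := Finset.sum_nonneg fun s' _ => hwnn s'
  have hvle : ∀ n, v n ≤ W * c ^ (n / M) := by
    intro n
    have h1 : ∀ s, g n s ≤ c ^ (n / M) := by
      intro s
      have key := hganti ((n / M) * M) (n % M) s
      have hnn : (n / M) * M + n % M = n := by
        rw [mul_comm]; exact Nat.div_add_mod n M
      rw [hnn] at key
      exact le_trans key (hgeo (n / M) s)
    calc v n ≤ ∑ s', w s' * c ^ (n / M) := Finset.sum_le_sum fun s' _ =>
          mul_le_mul_of_nonneg_left (h1 s') (hwnn s')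
      _ = W * c ^ (n / M) := by rw [hWdef, Finset.sum_mul]
  have hvlim : Tendsto v atTop (𝓝 0) := by
    have hdiv : Tendsto (fun n : ℕ => n / M) atTop atTop := by
      apply Filter.tendsto_atTop_atTop.mpr
      intro b
      exact ⟨b * M, fun n hn => Nat.le_div_iff_mul_le (by omega) |>.mpr hn⟩
    have hpow : Tendsto (fun k : ℕ => c ^ k) atTop (𝓝 0) :=
      tendsto_pow_atTop_nhds_zero_of_lt_one hc0 hc1
    have h2 : Tendsto (fun n : ℕ => W * c ^ (n / M)) atTop (𝓝 (W * 0)) :=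
      (hpow.comp hdiv).const_mul W
    rw [mul_zero] at h2
    exact squeeze_zero hvnn hvle h2
  -- telescoping
  have htel : ∀ m : ℕ, P (m + 2) = v m - v (m + 1) := by
    intro m
    have hP : P (m + 2) = ∑ b, Matrix.vecMul ϖ (QRS * QSS ^ m * QSR) b := by
      have := hPk (m + 2) (by omega)
      simpa using this
    set u : {i // ¬ rp i} → ℝ := Matrix.vecMul ϖ (QRS * QSS ^ m) with hudef
    have h1 : ∀ b, Matrix.vecMul ϖ (QRS * QSS ^ m * QSR) b = ∑ s, u s * QSR s b := by
      intro b
      rw [← Matrix.vecMul_vecMul, ← hudef]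
      simp [Matrix.vecMul, dotProduct]
    have hunn : ∀ s, 0 ≤ u s := by
      intro s
      rw [hudef]
      simp only [Matrix.vecMul, dotProduct]
      exact Finset.sum_nonneg fun b _ => mul_nonneg (hϖnn b)
        (stmt17_mul_nn QRS (QSS ^ m) hQRSnn (hQSSpow m) b s)
    have h2 : ∑ s, u s * (∑ s', QSS s s') = v (m + 1) := by
      have h3 : ∀ s', Matrix.vecMul ϖ (QRS * QSS ^ (m + 1)) s' = ∑ s, u s * QSS s s' := by
        intro s'
        have : QRS * QSS ^ (m + 1) = (QRS * QSS ^ m) * QSS := by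
          rw [pow_succ, Matrix.mul_assoc]
        rw [this, ← Matrix.vecMul_vecMul, ← hudef]
        simp [Matrix.vecMul, dotProduct]
      rw [hveq (m + 1)]
      calc (∑ s, u s * ∑ s', QSS s s') = ∑ s, ∑ s', u s * QSS s s' := by
            exact Finset.sum_congr rfl fun s _ => Finset.mul_sum _ _ _
        _ = ∑ s', ∑ s, u s * QSS s s' := Finset.sum_comm
        _ = ∑ s', Matrix.vecMul ϖ (QRS * QSS ^ (m + 1)) s' := by
            exact Finset.sum_congr rfl fun s' _ => (h3 s').symm
    have hvm : v m = ∑ s, u s := by rw [hveq m, hudef]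
    calc P (m + 2) = ∑ b, ∑ s, u s * QSR s b := by
          rw [hP]; exact Finset.sum_congr rfl fun b _ => h1 b
      _ = ∑ s, ∑ b, u s * QSR s b := Finset.sum_comm
      _ = ∑ s, u s * (∑ b, QSR s b) := by
          exact Finset.sum_congr rfl fun s _ => (Finset.mul_sum _ _ _).symm
      _ = ∑ s, (u s - u s * (∑ s', QSS s s')) := by
          refine Finset.sum_congr rfl fun s _ => ?_
          have := hrowS s
          nlinarith [hunn s]
      _ = (∑ s, u s) - ∑ s, u s * (∑ s', QSS s s') := Finset.sum_sub_distrib _ _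
      _ = v m - v (m + 1) := by rw [h2, hvm]
  -- nonnegativity of P
  have hPnn : ∀ k, 1 ≤ k → 0 ≤ P k := by
    intro k hk
    rcases eq_or_lt_of_le hk with h | h
    · rw [← h, hP1]
      refine Finset.sum_nonneg fun b _ => ?_
      simp only [Matrix.vecMul, dotProduct]
      exact Finset.sum_nonneg fun b' _ => mul_nonneg (hϖnn b') (hQRRnn b' b)
    · have hk2 : 2 ≤ k := h
      rw [hPk k hk2]
      refine Finset.sum_nonneg fun b _ => ?_
      simp only [Matrix.vecMul, dotProduct]
      refine Finset.sum_nonneg fun s _ => mul_nonneg (hϖnn s) ?_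
      exact stmt17_mul_nn _ _ (stmt17_mul_nn _ _ hQRSnn (hQSSpow (k-2))) hQSRnn s b
  refine ⟨hPnn, ?_⟩
  -- HasSum of the tail
  have htail : HasSum (fun m : ℕ => P (m + 2)) (v 0) := by
    rw [hasSum_iff_tendsto_nat_of_nonneg (fun m => hPnn (m + 2) (by omega)) (v 0)]
    have heq : ∀ n : ℕ, ∑ m ∈ Finset.range n, P (m + 2) = v 0 - v n := by
      intro n
      calc ∑ m ∈ Finset.range n, P (m + 2) = ∑ m ∈ Finset.range n, (v m - v (m + 1)) := by
            exact Finset.sum_congr rfl fun m _ => htel m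
        _ = v 0 - v n := Finset.sum_range_sub' v n
    simp only [heq]
    have : Tendsto (fun n => v 0 - v n) atTop (𝓝 (v 0 - 0)) :=
      (tendsto_const_nhds).sub hvlim
    rwa [sub_zero] at this
  -- P 1 + v 0 = 1
  have hv0 : v 0 = ∑ b, ϖ b * (∑ s, QRS b s) := by
    rw [hveq 0]
    calc (∑ s, Matrix.vecMul ϖ (QRS * QSS ^ 0) s)
        = ∑ s, ∑ b, ϖ b * QRS b s := by
          refine Finset.sum_congr rfl fun s _ => ?_
          rw [pow_zero, Matrix.mul_one]
          simp [Matrix.vecMul, dotProduct]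
      _ = ∑ b, ∑ s, ϖ b * QRS b s := Finset.sum_comm
      _ = ∑ b, ϖ b * (∑ s, QRS b s) := by
          exact Finset.sum_congr rfl fun b _ => (Finset.mul_sum _ _ _).symm
  have hsum1 : P 1 + v 0 = 1 := by
    have hP1' : P 1 = ∑ b', ϖ b' * (∑ b, QRR b' b) := by
      rw [hP1]
      calc (∑ b, Matrix.vecMul ϖ QRR b) = ∑ b, ∑ b', ϖ b' * QRR b' b := by
            refine Finset.sum_congr rfl fun b _ => ?_
            simp [Matrix.vecMul, dotProduct]
        _ = ∑ b', ∑ b, ϖ b' * QRR b' b := Finset.sum_comm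
        _ = ∑ b', ϖ b' * (∑ b, QRR b' b) := by
            exact Finset.sum_congr rfl fun b' _ => (Finset.mul_sum _ _ _).symm
    rw [hP1', hv0, ← Finset.sum_add_distrib]
    calc (∑ b, (ϖ b * (∑ b', QRR b b') + ϖ b * (∑ s, QRS b s)))
        = ∑ b, ϖ b := by
          refine Finset.sum_congr rfl fun b _ => ?_
          rw [← mul_add, hrowR b, mul_one]
      _ = 1 := hϖsum
  -- assemble
  have hfin : HasSum (fun k : ℕ => P (k + 1)) (v 0 + ∑ m ∈ Finset.range 1, P (m + 1)) := by
    rw [← hasSum_nat_add_iff 1]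
    exact htail
  have : v 0 + ∑ m ∈ Finset.range 1, P (m + 1) = 1 := by
    rw [Finset.sum_range_one]
    linarith
  rwa [this] at hfin
end

section
/- The mean of the return-time distribution equals the reciprocal of the stationary probability of R (Kac's formula for a set): ∑_{k=1}^{∞} k · P(k) = 1 / ∑_{b∈R} π_b, where P(1) = ϖ_R Q_{RR} 𝟙 and P(k) = ϖ_R Q_{RS} (Q_{SS})^{k−2} Q_{SR} 𝟙 for k ≥ 2. -/
open Finset Matrix Filter Topology

private lemma sum_vecMul'' {α β : Type*} [Fintype α] [Fintype β]
    (v : α → ℝ) (M : Matrix α β ℝ) :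
    ∑ b, Matrix.vecMul v M b = ∑ a, v a * ∑ b, M a b := by
  simp only [Matrix.vecMul, dotProduct, Finset.mul_sum]
  exact Finset.sum_comm

private lemma vecMul_nn {α β : Type*} [Fintype α] [Fintype β] {v : α → ℝ} {M : Matrix α β ℝ}
    (hv : ∀ a, 0 ≤ v a) (hM : ∀ a b, 0 ≤ M a b) (b : β) : 0 ≤ Matrix.vecMul v M b := by
  simp only [Matrix.vecMul, dotProduct]
  exact Finset.sum_nonneg fun a _ => mul_nonneg (hv a) (hM a b)

private lemma rowsum_mul' {α β γ : Type*} [Fintype α] [Fintype β] [Fintype γ]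
    (A : Matrix α β ℝ) (B : Matrix β γ ℝ) (a : α) :
    ∑ b, (A * B) a b = ∑ k, A a k * ∑ b, B k b := by
  simp only [Matrix.mul_apply, Finset.mul_sum]
  exact Finset.sum_comm

/-- Kac's formula for a set: the mean of the return-time distribution
`P 1 = ϖ_R Q_RR 𝟙`, `P k = ϖ_R Q_RS (Q_SS)^(k-2) Q_SR 𝟙` (`k ≥ 2`) equals the
reciprocal of the stationary probability of `R`:
`∑_{k≥1} k * P k = 1 / ∑_{b ∈ R} π b`. -/
theorem stmt_18 {ι : Type*} [Fintype ι] [DecidableEq ι]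
    (rp : ι → Prop) [DecidablePred rp]
    (hR : Nonempty {i // rp i}) (hS : Nonempty {i // ¬ rp i})
    (Q : Matrix ι ι ℝ)
    (hQnn : ∀ i j, 0 ≤ Q i j) (hQrow : ∀ i, ∑ j, Q i j = 1)
    (hirr : ∀ i j, ∃ m : ℕ, 1 ≤ m ∧ 0 < (Q ^ m) i j)
    (π : ι → ℝ) (hπnn : ∀ i, 0 ≤ π i) (hπsum : ∑ i, π i = 1)
    (hπstat : ∀ j, ∑ i, π i * Q i j = π j)
    (QRR : Matrix {i // rp i} {i // rp i} ℝ)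
    (hQRR : ∀ a b, QRR a b = Q a.val b.val)
    (QRS : Matrix {i // rp i} {i // ¬ rp i} ℝ)
    (hQRS : ∀ a b, QRS a b = Q a.val b.val)
    (QSR : Matrix {i // ¬ rp i} {i // rp i} ℝ)
    (hQSR : ∀ a b, QSR a b = Q a.val b.val)
    (QSS : Matrix {i // ¬ rp i} {i // ¬ rp i} ℝ)
    (hQSS : ∀ a b, QSS a b = Q a.val b.val)
    (ϖ : {i // rp i} → ℝ)
    (hϖ : ∀ b, ϖ b = π b.val / ∑ b' : {i // rp i}, π b'.val)
    (P : ℕ → ℝ)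
    (hP1 : P 1 = ∑ b, Matrix.vecMul ϖ QRR b)
    (hPk : ∀ k, 2 ≤ k → P k = ∑ b, Matrix.vecMul ϖ (QRS * QSS ^ (k - 2) * QSR) b) :
    HasSum (fun k : ℕ => ((k : ℝ) + 1) * P (k + 1))
      (1 / ∑ b : {i // rp i}, π b.val) := by
  classical
  obtain ⟨r0⟩ := hR
  obtain ⟨s0⟩ := hS
  set c : ℝ := ∑ b : {i // rp i}, π b.val with hcdef
  have hsplit : ∀ f : ι → ℝ,
      (∑ a : {i // rp i}, f a.val) + (∑ a : {i // ¬ rp i}, f a.val) = ∑ i, f i :=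
    fun f => Fintype.sum_subtype_add_sum_subtype rp f
  -- powers of Q
  have hQpow : ∀ m : ℕ, (∀ i j, 0 ≤ (Q ^ m) i j) ∧ (∀ i, ∑ j, (Q ^ m) i j = 1) := by
    intro m
    induction m with
    | zero =>
      constructor
      · intro i j; simp [Matrix.one_apply]; split <;> norm_num
      · intro i; simp [Matrix.one_apply]
    | succ n ih =>
      constructor
      · intro i j
        rw [pow_succ, Matrix.mul_apply]
        exact Finset.sum_nonneg fun k _ => mul_nonneg (ih.1 i k) (hQnn k j)
      · intro i
        rw [pow_succ, rowsum_mul']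
        simp only [hQrow, mul_one]
        exact ih.2 i
  -- stationarity for powers
  have hstatpow : ∀ m j, ∑ i, π i * (Q ^ m) i j = π j := by
    intro m
    induction m with
    | zero => intro j; simp [Matrix.one_apply]
    | succ n ih =>
      intro j
      rw [pow_succ]
      have h1 : ∑ i, π i * (Q ^ n * Q) i j
          = ∑ k, (∑ i, π i * (Q ^ n) i k) * Q k j := by
        simp only [Matrix.mul_apply, Finset.mul_sum, Finset.sum_mul, ← mul_assoc]
        exact Finset.sum_comm
      rw [h1]
      simp only [ih]
      exact hπstat j
  -- positivity of π
  have hex : ∃ i, 0 < π i := by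
    by_contra h
    push_neg at h
    have h0 : ∀ i, π i = 0 := fun i => le_antisymm (h i) (hπnn i)
    simp [h0] at hπsum
  obtain ⟨i0, hi0⟩ := hex
  have hπpos : ∀ j, 0 < π j := by
    intro j
    obtain ⟨m, _, hm⟩ := hirr i0 j
    have h1 := hstatpow m j
    have hle : π i0 * (Q ^ m) i0 j ≤ ∑ i, π i * (Q ^ m) i j :=
      Finset.single_le_sum (fun i _ => mul_nonneg (hπnn i) ((hQpow m).1 i j)) (Finset.mem_univ i0)
    nlinarith [mul_pos hi0 hm]
  have hcpos : 0 < c := by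
    rw [hcdef]
    exact Finset.sum_pos (fun b _ => hπpos b.val) ⟨r0, Finset.mem_univ r0⟩
  have hcne : c ≠ 0 := ne_of_gt hcpos
  -- vectors
  set u : {i // rp i} → ℝ := fun b => π b.val with hu
  set σv : {i // ¬ rp i} → ℝ := fun b => π b.val with hσ
  set w : {i // ¬ rp i} → ℝ := Matrix.vecMul u QRS with hw
  set aseq : ℕ → ℝ := fun m => ∑ b, Matrix.vecMul w (QSS ^ m) b with ha
  set sseq : ℕ → ℝ := fun m => ∑ b, Matrix.vecMul σv (QSS ^ m) b with hsdef
  have hϖ' : ϖ = c⁻¹ • u := by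
    funext b
    rw [hϖ b]
    simp [hu, div_eq_inv_mul]
  -- entrywise nonnegativity
  have hQRRnn : ∀ a b, 0 ≤ QRR a b := fun a b => (hQRR a b) ▸ hQnn _ _
  have hQRSnn : ∀ a b, 0 ≤ QRS a b := fun a b => (hQRS a b) ▸ hQnn _ _
  have hQSRnn : ∀ a b, 0 ≤ QSR a b := fun a b => (hQSR a b) ▸ hQnn _ _
  have hQSSnn : ∀ a b, 0 ≤ QSS a b := fun a b => (hQSS a b) ▸ hQnn _ _
  have hQSSpow_nn : ∀ m a b, 0 ≤ (QSS ^ m) a b := by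
    intro m
    induction m with
    | zero => intro a b; simp [Matrix.one_apply]; split <;> norm_num
    | succ n ih =>
      intro a b
      rw [pow_succ, Matrix.mul_apply]
      exact Finset.sum_nonneg fun k _ => mul_nonneg (ih a k) (hQSSnn k b)
  have hun : ∀ b, 0 ≤ u b := fun b => hπnn _
  have hσn : ∀ b, 0 ≤ σv b := fun b => hπnn _
  have hwn : ∀ b, 0 ≤ w b := fun b => vecMul_nn hun hQRSnn b
  -- stationarity split on S
  have hF2 : ∀ b, σv b = w b + Matrix.vecMul σv QSS b := by
    intro b
    have h1 := hsplit (fun i => π i * Q i b.val)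
    rw [hπstat b.val] at h1
    have h2 : w b = ∑ a : {i // rp i}, π a.val * Q a.val b.val := by
      rw [hw]
      simp only [Matrix.vecMul, dotProduct, hu, hQRS]
    have h3 : Matrix.vecMul σv QSS b = ∑ a : {i // ¬ rp i}, π a.val * Q a.val b.val := by
      simp only [Matrix.vecMul, dotProduct, hσ, hQSS]
    rw [h2, h3, hσ]
    linarith
  -- a m = s m - s (m+1)
  have hA : ∀ m, aseq m = sseq m - sseq (m + 1) := by
    intro m
    have h1 : Matrix.vecMul σv (QSS ^ (m + 1))
        = Matrix.vecMul (Matrix.vecMul σv QSS) (QSS ^ m) := by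
      rw [pow_succ', ← Matrix.vecMul_vecMul]
    have h2 : (fun b => Matrix.vecMul σv (QSS ^ m) b)
        = fun b => Matrix.vecMul w (QSS ^ m) b
            + Matrix.vecMul (Matrix.vecMul σv QSS) (QSS ^ m) b := by
      funext b
      have hσeq : σv = w + Matrix.vecMul σv QSS := funext fun b' => hF2 b'
      conv_lhs => rw [hσeq]
      rw [Matrix.add_vecMul]
      simp
    have h3 : sseq m = aseq m + sseq (m + 1) := by
      rw [hsdef, ha]
      simp only
      calc ∑ b, Matrix.vecMul σv (QSS ^ m) b
          = ∑ b, (Matrix.vecMul w (QSS ^ m) b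
              + Matrix.vecMul (Matrix.vecMul σv QSS) (QSS ^ m) b) := by rw [← h2]
        _ = (∑ b, Matrix.vecMul w (QSS ^ m) b)
              + ∑ b, Matrix.vecMul (Matrix.vecMul σv QSS) (QSS ^ m) b :=
            Finset.sum_add_distrib
        _ = (∑ b, Matrix.vecMul w (QSS ^ m) b)
              + ∑ b, Matrix.vecMul σv (QSS ^ (m + 1)) b := by rw [h1]
    linarith
  -- row sums
  have hrowS : ∀ a : {i // ¬ rp i}, (∑ b, QSR a b) + (∑ b, QSS a b) = 1 := by
    intro a
    have h1 := hsplit (fun j => Q a.val j)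
    rw [hQrow a.val] at h1
    simpa [hQSR, hQSS] using h1
  have hrowR : ∀ a : {i // rp i}, (∑ b, QRR a b) + (∑ b, QRS a b) = 1 := by
    intro a
    have h1 := hsplit (fun j => Q a.val j)
    rw [hQrow a.val] at h1
    simpa [hQRR, hQRS] using h1
  have hQSSrow_le : ∀ a, ∑ b, QSS a b ≤ 1 := by
    intro a
    have := hrowS a
    have h0 : 0 ≤ ∑ b, QSR a b := Finset.sum_nonneg fun b _ => hQSRnn a b
    linarith
  -- scalar identities for P
  have hB : ∀ k : ℕ, c * P (k + 2) = aseq k - aseq (k + 1) := by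
    intro k
    rw [hPk (k + 2) (by omega)]
    have hk2 : k + 2 - 2 = k := by omega
    rw [hk2, hϖ']
    have hsm : ∀ b, Matrix.vecMul (c⁻¹ • u) (QRS * QSS ^ k * QSR) b
        = c⁻¹ * Matrix.vecMul u (QRS * QSS ^ k * QSR) b := by
      intro b
      rw [Matrix.smul_vecMul]
      simp
    simp only [hsm, ← Finset.mul_sum]
    rw [← mul_assoc, mul_inv_cancel₀ hcne, one_mul]
    have hv : Matrix.vecMul u (QRS * QSS ^ k * QSR)
        = Matrix.vecMul (Matrix.vecMul w (QSS ^ k)) QSR := by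
      rw [hw, Matrix.vecMul_vecMul, Matrix.vecMul_vecMul, Matrix.mul_assoc]
    rw [hv, sum_vecMul'']
    have hrw : ∀ a, ∑ b, QSR a b = 1 - ∑ b, QSS a b := fun a => by linarith [hrowS a]
    simp only [hrw, mul_sub, mul_one]
    rw [Finset.sum_sub_distrib]
    have e1 : ∑ a, Matrix.vecMul w (QSS ^ k) a = aseq k := rfl
    have e2 : ∑ a, Matrix.vecMul w (QSS ^ k) a * ∑ b, QSS a b = aseq (k + 1) := by
      rw [← sum_vecMul'']
      rw [ha]
      simp only
      congr 1
      funext b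
      rw [Matrix.vecMul_vecMul, ← pow_succ]
    rw [e1, e2]
  have hC : c * P 1 = c - aseq 0 := by
    rw [hP1, hϖ']
    have hsm : ∀ b, Matrix.vecMul (c⁻¹ • u) QRR b = c⁻¹ * Matrix.vecMul u QRR b := by
      intro b
      rw [Matrix.smul_vecMul]
      simp
    simp only [hsm, ← Finset.mul_sum]
    rw [← mul_assoc, mul_inv_cancel₀ hcne, one_mul]
    rw [sum_vecMul'']
    have hrw : ∀ a, ∑ b, QRR a b = 1 - ∑ b, QRS a b := fun a => by linarith [hrowR a]
    simp only [hrw, mul_sub, mul_one]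
    rw [Finset.sum_sub_distrib]
    have e1 : ∑ a, u a = c := by rw [hcdef, hu]
    have e2 : ∑ a, u a * ∑ b, QRS a b = aseq 0 := by
      rw [← sum_vecMul'', ha]
      simp [hw]
    rw [e1, e2]
  have hs0 : sseq 0 + c = 1 := by
    have h1 := hsplit π
    rw [hπsum] at h1
    have e1 : sseq 0 = ∑ a : {i // ¬ rp i}, π a.val := by
      rw [hsdef]
      simp [hσ, Matrix.vecMul_one]
    rw [e1, hcdef]
    linarith
  -- partial sums
  have hpartial : ∀ N : ℕ,
      ∑ k ∈ Finset.range (N + 1), c * (((k : ℝ) + 1) * P (k + 1))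
        = 1 - sseq N - ((N : ℝ) + 1) * aseq N := by
    intro N
    induction N with
    | zero =>
      rw [Finset.sum_range_one]
      push_cast
      have h1 : c * ((0 + 1) * P (0 + 1)) = c * P 1 := by norm_num
      rw [h1]
      linarith [hC, hs0]
    | succ n ih =>
      rw [Finset.sum_range_succ, ih]
      have hb := hB n
      have hA' := hA n
      have hcast : c * (((↑(n + 1) : ℝ) + 1) * P (n + 1 + 1))
          = ((n : ℝ) + 2) * (c * P (n + 2)) := by
        push_cast
        ring
      rw [hcast, hb]
      push_cast
      linear_combination hA'
  -- domination of QSS^m by Q^m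
  have hdom : ∀ m (b b' : {i // ¬ rp i}), (QSS ^ m) b b' ≤ (Q ^ m) b.val b'.val := by
    intro m
    induction m with
    | zero =>
      intro b b'
      rcases eq_or_ne b b' with h | h
      · subst h; simp [Matrix.one_apply]
      · have h2 : b.val ≠ b'.val := fun hh => h (Subtype.ext hh)
        simp [Matrix.one_apply, h, h2]
    | succ n ih =>
      intro b b'
      rw [pow_succ, pow_succ, Matrix.mul_apply, Matrix.mul_apply]
      calc ∑ cc, (QSS ^ n) b cc * QSS cc b'
          ≤ ∑ cc : {i // ¬ rp i}, (Q ^ n) b.val cc.val * Q cc.val b'.val := by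
            refine Finset.sum_le_sum fun cc _ => ?_
            rw [hQSS cc b']
            exact mul_le_mul_of_nonneg_right (ih b cc) (hQnn _ _)
        _ ≤ ∑ j, (Q ^ n) b.val j * Q j b'.val := by
            have h2 := hsplit (fun j => (Q ^ n) b.val j * Q j b'.val)
            have h3 : 0 ≤ ∑ a : {i // rp i}, (Q ^ n) b.val a.val * Q a.val b'.val :=
              Finset.sum_nonneg fun a _ => mul_nonneg ((hQpow n).1 _ _) (hQnn _ _)
            linarith
  -- row sums of powers of QSS
  set rS : ℕ → {i // ¬ rp i} → ℝ := fun m b => ∑ b', (QSS ^ m) b b' with hrS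
  have hrow_succ : ∀ b m, rS (m + 1) b ≤ rS m b := by
    intro b m
    have h1 : rS (m + 1) b = ∑ cc, (QSS ^ m) b cc * ∑ b', QSS cc b' := by
      rw [hrS]
      simp only
      rw [pow_succ, rowsum_mul']
    rw [h1]
    calc ∑ cc, (QSS ^ m) b cc * ∑ b', QSS cc b'
        ≤ ∑ cc, (QSS ^ m) b cc * 1 :=
          Finset.sum_le_sum fun cc _ =>
            mul_le_mul_of_nonneg_left (hQSSrow_le cc) (hQSSpow_nn m b cc)
      _ = rS m b := by simp [hrS]
  have hrow_anti : ∀ b, Antitone (fun m => rS m b) :=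
    fun b => antitone_nat_of_succ_le (fun m => hrow_succ b m)
  have hexit : ∀ b : {i // ¬ rp i}, ∃ m, 1 ≤ m ∧ rS m b < 1 := by
    intro b
    obtain ⟨m, hm1, hmpos⟩ := hirr b.val r0.val
    refine ⟨m, hm1, ?_⟩
    have h1 : rS m b ≤ ∑ b' : {i // ¬ rp i}, (Q ^ m) b.val b'.val :=
      Finset.sum_le_sum fun b' _ => hdom m b b'
    have h2 := hsplit (fun j => (Q ^ m) b.val j)
    rw [(hQpow m).2 b.val] at h2
    have h3 : (Q ^ m) b.val r0.val ≤ ∑ a : {i // rp i}, (Q ^ m) b.val a.val :=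
      Finset.single_le_sum (fun a _ => (hQpow m).1 _ _) (Finset.mem_univ r0)
    linarith
  choose em hem1 hemlt using hexit
  set M : ℕ := Finset.univ.sup em with hM
  have hM1 : 0 < M := lt_of_lt_of_le (hem1 s0) (Finset.le_sup (Finset.mem_univ s0))
  have hrSM : ∀ b, rS M b < 1 := fun b =>
    lt_of_le_of_lt (hrow_anti b (Finset.le_sup (Finset.mem_univ b))) (hemlt b)
  have hune : (Finset.univ : Finset {i // ¬ rp i}).Nonempty := ⟨s0, Finset.mem_univ s0⟩
  set ρ : ℝ := Finset.univ.sup' hune (fun b => rS M b) with hρ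
  have hρlt : ρ < 1 := (Finset.sup'_lt_iff hune).mpr fun b _ => hrSM b
  have hρge : ∀ b, rS M b ≤ ρ := fun b => Finset.le_sup' _ (Finset.mem_univ b)
  have hρ0 : 0 ≤ ρ :=
    le_trans (Finset.sum_nonneg fun b' _ => hQSSpow_nn M s0 b') (hρge s0)
  -- s bounds
  have hsnn : ∀ n, 0 ≤ sseq n :=
    fun n => Finset.sum_nonneg fun b _ => vecMul_nn hσn (hQSSpow_nn n) b
  have hann : ∀ n, 0 ≤ aseq n :=
    fun n => Finset.sum_nonneg fun b _ => vecMul_nn hwn (hQSSpow_nn n) b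
  have hsplitpow : ∀ n k, sseq (n + k) = ∑ a, Matrix.vecMul σv (QSS ^ n) a * rS k a := by
    intro n k
    rw [hsdef]
    simp only
    rw [pow_add]
    have h1 : ∀ b, Matrix.vecMul σv (QSS ^ n * QSS ^ k) b
        = Matrix.vecMul (Matrix.vecMul σv (QSS ^ n)) (QSS ^ k) b := by
      intro b; rw [Matrix.vecMul_vecMul]
    simp only [h1]
    rw [sum_vecMul'']
  have hstepM : ∀ n, sseq (n + M) ≤ ρ * sseq n := by
    intro n
    rw [hsplitpow n M]
    have hvnn : ∀ b, 0 ≤ Matrix.vecMul σv (QSS ^ n) b :=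
      fun b => vecMul_nn hσn (hQSSpow_nn n) b
    calc ∑ a, Matrix.vecMul σv (QSS ^ n) a * rS M a
        ≤ ∑ a, Matrix.vecMul σv (QSS ^ n) a * ρ :=
          Finset.sum_le_sum fun a _ => mul_le_mul_of_nonneg_left (hρge a) (hvnn a)
      _ = ρ * sseq n := by rw [← Finset.sum_mul, mul_comm]
  have hs_succ : ∀ n, sseq (n + 1) ≤ sseq n := by
    intro n
    rw [hsplitpow n 1]
    have hvnn : ∀ b, 0 ≤ Matrix.vecMul σv (QSS ^ n) b :=
      fun b => vecMul_nn hσn (hQSSpow_nn n) b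
    have hr1 : ∀ a, rS 1 a ≤ 1 := by
      intro a
      have : rS 1 a = ∑ b, QSS a b := by rw [hrS]; simp
      rw [this]; exact hQSSrow_le a
    calc ∑ a, Matrix.vecMul σv (QSS ^ n) a * rS 1 a
        ≤ ∑ a, Matrix.vecMul σv (QSS ^ n) a * 1 :=
          Finset.sum_le_sum fun a _ => mul_le_mul_of_nonneg_left (hr1 a) (hvnn a)
      _ = sseq n := by simp [hsdef]
  have hs_anti : Antitone sseq := antitone_nat_of_succ_le hs_succ
  have hgeo : ∀ q, sseq (M * q) ≤ ρ ^ q * sseq 0 := by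
    intro q
    induction q with
    | zero => simp
    | succ t ih =>
      have he : M * (t + 1) = M * t + M := by ring
      rw [he]
      calc sseq (M * t + M) ≤ ρ * sseq (M * t) := hstepM (M * t)
        _ ≤ ρ * (ρ ^ t * sseq 0) := mul_le_mul_of_nonneg_left ih hρ0
        _ = ρ ^ (t + 1) * sseq 0 := by ring
  have hsbound : ∀ n, sseq n ≤ ρ ^ (n / M) * sseq 0 := by
    intro n
    have h1 : M * (n / M) ≤ n := Nat.mul_div_le n M
    exact le_trans (hs_anti h1) (hgeo (n / M))
  -- limits
  have hcomp : Tendsto (fun q : ℕ => (M : ℝ) * (((q : ℝ) + 1) * (ρ ^ q * sseq 0)))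
      atTop (𝓝 0) := by
    have h1 := tendsto_pow_const_mul_const_pow_of_lt_one 1 hρ0 hρlt
    have h2 := tendsto_pow_atTop_nhds_zero_of_lt_one hρ0 hρlt
    have h3 : Tendsto (fun q : ℕ => ((q : ℝ) + 1) * ρ ^ q) atTop (𝓝 0) := by
      have := h1.add h2
      simp only [pow_one] at this
      convert this using 2 with q
      · ring
      · norm_num
    have h4 := (h3.const_mul ((M : ℝ) * sseq 0))
    simp only [mul_zero] at h4
    convert h4 using 2 with q
    ring
  have hdiv : Tendsto (fun n : ℕ => n / M) atTop atTop :=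
    le_of_eq (map_div_atTop_eq_nat M hM1)
  have hcomp2 := hcomp.comp hdiv
  have hlim1 : Tendsto (fun n : ℕ => ((n : ℝ) + 1) * sseq n) atTop (𝓝 0) := by
    refine tendsto_of_tendsto_of_tendsto_of_le_of_le tendsto_const_nhds hcomp2 ?_ ?_
    · intro n
      exact mul_nonneg (by positivity) (hsnn n)
    · intro n
      have hb1 : sseq n ≤ ρ ^ (n / M) * sseq 0 := hsbound n
      have hb2 : ((n : ℝ) + 1) ≤ (M : ℝ) * ((↑(n / M) : ℝ) + 1) := by
        have hnat : n + 1 ≤ M * (n / M + 1) := by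
          have hd := Nat.div_add_mod n M
          have hm := Nat.mod_lt n hM1
          calc n + 1 = M * (n / M) + (n % M + 1) := by omega
            _ ≤ M * (n / M) + M := by omega
            _ = M * (n / M + 1) := by rw [Nat.mul_succ]
        calc ((n : ℝ) + 1) = ((n + 1 : ℕ) : ℝ) := by push_cast; ring
          _ ≤ ((M * (n / M + 1) : ℕ) : ℝ) := by exact_mod_cast Nat.cast_le.mpr hnat
          _ = (M : ℝ) * ((↑(n / M) : ℝ) + 1) := by push_cast; ring
      show ((n : ℝ) + 1) * sseq n ≤ (M : ℝ) * (((↑(n / M) : ℝ) + 1) * (ρ ^ (n / M) * sseq 0))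
      calc ((n : ℝ) + 1) * sseq n
          ≤ ((M : ℝ) * ((↑(n / M) : ℝ) + 1)) * (ρ ^ (n / M) * sseq 0) := by
            apply mul_le_mul hb2 hb1 (hsnn n)
            positivity
        _ = (M : ℝ) * (((↑(n / M) : ℝ) + 1) * (ρ ^ (n / M) * sseq 0)) := by ring
  have hlim_s : Tendsto sseq atTop (𝓝 0) := by
    refine tendsto_of_tendsto_of_tendsto_of_le_of_le tendsto_const_nhds hlim1 hsnn ?_
    intro n
    have h1 : (0 : ℝ) ≤ (n : ℝ) := Nat.cast_nonneg n
    show sseq n ≤ ((n : ℝ) + 1) * sseq n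
    nlinarith [hsnn n]
  have ha_le_s : ∀ n, aseq n ≤ sseq n := by
    intro n
    have h1 := hA n
    have h2 := hsnn (n + 1)
    linarith
  have hlim_a : Tendsto (fun n : ℕ => ((n : ℝ) + 1) * aseq n) atTop (𝓝 0) := by
    refine tendsto_of_tendsto_of_tendsto_of_le_of_le tendsto_const_nhds hlim1 ?_ ?_
    · intro n; exact mul_nonneg (by positivity) (hann n)
    · intro n
      exact mul_le_mul_of_nonneg_left (ha_le_s n) (by positivity)
  -- nonnegativity of terms
  have hϖnn : ∀ b, 0 ≤ ϖ b := by
    intro b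
    rw [hϖ b]
    exact div_nonneg (hπnn _) hcpos.le
  have hfnn : ∀ k : ℕ, 0 ≤ ((k : ℝ) + 1) * P (k + 1) := by
    intro k
    apply mul_nonneg (by positivity)
    match k with
    | 0 =>
      rw [hP1]
      exact Finset.sum_nonneg fun b _ => vecMul_nn hϖnn hQRRnn b
    | (k + 1) =>
      rw [hPk (k + 2) (by omega)]
      have hk2 : k + 2 - 2 = k := by omega
      rw [hk2]
      have hmn : ∀ a b, 0 ≤ (QRS * QSS ^ k * QSR) a b := by
        intro a b
        rw [Matrix.mul_apply]
        refine Finset.sum_nonneg fun cc _ => mul_nonneg ?_ (hQSRnn cc b)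
        rw [Matrix.mul_apply]
        exact Finset.sum_nonneg fun dd _ => mul_nonneg (hQRSnn a dd) (hQSSpow_nn k dd cc)
      exact Finset.sum_nonneg fun b _ => vecMul_nn hϖnn hmn b
  -- assembly
  rw [hasSum_iff_tendsto_nat_of_nonneg hfnn]
  rw [← tendsto_add_atTop_iff_nat 1]
  have heq : (fun N : ℕ => ∑ k ∈ Finset.range (N + 1), ((k : ℝ) + 1) * P (k + 1))
      = fun N : ℕ => (1 - sseq N - ((N : ℝ) + 1) * aseq N) / c := by
    funext N
    have h1 := hpartial N
    rw [← Finset.mul_sum] at h1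
    rw [eq_div_iff hcne, mul_comm]
    exact h1
  have hgoal : Tendsto (fun N : ℕ => (1 - sseq N - ((N : ℝ) + 1) * aseq N) / c)
      atTop (𝓝 (1 / c)) := by
    have h1 : Tendsto (fun N : ℕ => 1 - sseq N - ((N : ℝ) + 1) * aseq N) atTop (𝓝 1) := by
      have h2 := (tendsto_const_nhds (x := (1 : ℝ)) (f := atTop)).sub hlim_s
      have h3 := h2.sub hlim_a
      simpa using h3
    simpa using h1.div_const c
  exact heq ▸ hgoal
end
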